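/- With f_μ = (√(κμ) − 1)^{2/3}·(κ − √(κμ))^{2/3} / ((κ−1)·κ^{1/6}·μ^{1/6}), the third derivative of G at ψ equals G‴(ψ) = 2·(f_μ/ψ)³. -/

import Mathlib

lemma stmt11_hd1 (κ q μ gμ : ℝ) (hκ : 0 < κ) (hq : 0 < q) {z : ℝ} (hz : 0 < z) :
    HasDerivAt (fun z => μ * Real.log (κ⁻¹ * z + q) - Real.log (z + q) + gμ * Real.log z)
      (μ * κ⁻¹ * (κ⁻¹ * z + q)⁻¹ - (z + q)⁻¹ + gμ * z⁻¹) z := by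
  have h1 : (0:ℝ) < κ⁻¹ * z + q := by positivity
  have h2 : (0:ℝ) < z + q := by positivity
  have hf : HasDerivAt (fun z : ℝ => κ⁻¹ * z + q) κ⁻¹ z := by
    simpa using ((hasDerivAt_id z).const_mul κ⁻¹).add_const q
  have hg : HasDerivAt (fun z : ℝ => z + q) 1 z := (hasDerivAt_id z).add_const q
  have hA := (hf.log h1.ne').const_mul μ
  have hB := hg.log h2.ne'
  have hC := (Real.hasDerivAt_log hz.ne').const_mul gμ
  refine ((hA.sub hB).add hC).congr_deriv ?_
  field_simp

lemma stmt11_hd2 (κ q μ gμ : ℝ) (hκ : 0 < κ) (hq : 0 < q) {z : ℝ} (hz : 0 < z) :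
    HasDerivAt (fun z : ℝ => μ * κ⁻¹ * (κ⁻¹ * z + q)⁻¹ - (z + q)⁻¹ + gμ * z⁻¹)
      (-(μ * κ⁻¹ ^ 2) * ((κ⁻¹ * z + q) ^ 2)⁻¹ + ((z + q) ^ 2)⁻¹ - gμ * (z ^ 2)⁻¹) z := by
  have h1 : (0:ℝ) < κ⁻¹ * z + q := by positivity
  have h2 : (0:ℝ) < z + q := by positivity
  have hf : HasDerivAt (fun z : ℝ => κ⁻¹ * z + q) κ⁻¹ z := by
    simpa using ((hasDerivAt_id z).const_mul κ⁻¹).add_const q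
  have hg : HasDerivAt (fun z : ℝ => z + q) 1 z := (hasDerivAt_id z).add_const q
  have hA := (hf.inv h1.ne').const_mul (μ * κ⁻¹)
  have hB := hg.inv h2.ne'
  have hC := (hasDerivAt_inv hz.ne').const_mul gμ
  refine ((hA.sub hB).add hC).congr_deriv ?_
  field_simp
  ring

lemma stmt11_hd3 (κ q μ gμ : ℝ) (hκ : 0 < κ) (hq : 0 < q) {z : ℝ} (hz : 0 < z) :
    HasDerivAt
      (fun z : ℝ => -(μ * κ⁻¹ ^ 2) * ((κ⁻¹ * z + q) ^ 2)⁻¹ + ((z + q) ^ 2)⁻¹ - gμ * (z ^ 2)⁻¹)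
      (2 * μ * κ⁻¹ ^ 3 * ((κ⁻¹ * z + q) ^ 3)⁻¹ - 2 * ((z + q) ^ 3)⁻¹ + 2 * gμ * (z ^ 3)⁻¹) z := by
  have h1 : (0:ℝ) < κ⁻¹ * z + q := by positivity
  have h2 : (0:ℝ) < z + q := by positivity
  have hf : HasDerivAt (fun z : ℝ => κ⁻¹ * z + q) κ⁻¹ z := by
    simpa using ((hasDerivAt_id z).const_mul κ⁻¹).add_const q
  have hg : HasDerivAt (fun z : ℝ => z + q) 1 z := (hasDerivAt_id z).add_const q
  have hA := ((hf.pow 2).inv (pow_ne_zero 2 h1.ne')).const_mul (-(μ * κ⁻¹ ^ 2))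
  have hB := (hg.pow 2).inv (pow_ne_zero 2 h2.ne')
  have hC := ((hasDerivAt_pow 2 z).inv (pow_ne_zero 2 hz.ne')).const_mul gμ
  refine ((hA.add hB).sub hC).congr_deriv ?_
  simp only [Pi.pow_apply, Nat.cast_ofNat, Nat.reduceSub, pow_one]
  field_simp
  ring

set_option maxHeartbeats 2000000 in
/-- The third derivative of the phase function at the double critical point:
`G‴(ψ) = 2 (f_μ/ψ)³`, where `f_μ` is the Tracy–Widom scaling factor. -/
theorem stmt11 (κ q μ : ℝ) (hκ : 1 < κ) (hq0 : 0 < q) (hq1 : q < 1)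
    (hμ1 : κ⁻¹ < μ) (hμ2 : μ < κ) :
    let gμ : ℝ := (Real.sqrt μ - Real.sqrt κ) ^ 2 / (κ - 1)
    let ψ : ℝ := q * (κ - Real.sqrt (κ * μ)) / (Real.sqrt (κ * μ) - 1)
    let G : ℝ → ℝ := fun z =>
      μ * Real.log (κ⁻¹ * z + q) - Real.log (z + q) + gμ * Real.log z
    let fμ : ℝ := (Real.sqrt (κ * μ) - 1) ^ ((2 : ℝ) / 3) *
      (κ - Real.sqrt (κ * μ)) ^ ((2 : ℝ) / 3) /
      ((κ - 1) * κ ^ ((1 : ℝ) / 6) * μ ^ ((1 : ℝ) / 6))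
    deriv (deriv (deriv G)) ψ = 2 * (fμ / ψ) ^ 3 := by
  intro gμ ψ G fμ
  have hκ0 : (0:ℝ) < κ := by linarith
  have hμ0 : (0:ℝ) < μ := lt_trans (by positivity) hμ1
  obtain ⟨s, hsdef⟩ : ∃ s, Real.sqrt (κ * μ) = s := ⟨_, rfl⟩
  have hs0 : 0 ≤ s := hsdef ▸ Real.sqrt_nonneg _
  have hs2 : s ^ 2 = κ * μ := by rw [← hsdef]; exact Real.sq_sqrt (by positivity)
  have hκμ1 : 1 < κ * μ := by
    calc (1:ℝ) = κ * κ⁻¹ := by field_simp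
    _ < κ * μ := mul_lt_mul_of_pos_left hμ1 hκ0
  have hs1 : 1 < s := by nlinarith
  have hsκ : s < κ := by nlinarith
  have hψdef : ψ = q * (κ - s) / (s - 1) := by
    rw [show ψ = q * (κ - Real.sqrt (κ * μ)) / (Real.sqrt (κ * μ) - 1) from rfl, hsdef]
  have hψ : 0 < ψ := by
    rw [hψdef]; exact div_pos (mul_pos hq0 (by linarith)) (by linarith)
  -- the three derivatives
  have E1 : deriv G =ᶠ[nhds ψ]
      fun z : ℝ => μ * κ⁻¹ * (κ⁻¹ * z + q)⁻¹ - (z + q)⁻¹ + gμ * z⁻¹ := by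
    filter_upwards [eventually_gt_nhds hψ] with z hz
    exact (stmt11_hd1 κ q μ gμ hκ0 hq0 hz).deriv
  have E2 : (deriv fun z : ℝ => μ * κ⁻¹ * (κ⁻¹ * z + q)⁻¹ - (z + q)⁻¹ + gμ * z⁻¹) =ᶠ[nhds ψ]
      fun z : ℝ => -(μ * κ⁻¹ ^ 2) * ((κ⁻¹ * z + q) ^ 2)⁻¹ + ((z + q) ^ 2)⁻¹ - gμ * (z ^ 2)⁻¹ := by
    filter_upwards [eventually_gt_nhds hψ] with z hz
    exact (stmt11_hd2 κ q μ gμ hκ0 hq0 hz).deriv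
  have E3 : deriv (deriv (deriv G)) ψ =
      2 * μ * κ⁻¹ ^ 3 * ((κ⁻¹ * ψ + q) ^ 3)⁻¹ - 2 * ((ψ + q) ^ 3)⁻¹ + 2 * gμ * (ψ ^ 3)⁻¹ := by
    rw [((E1.deriv.trans E2).deriv).eq_of_nhds]
    exact (stmt11_hd3 κ q μ gμ hκ0 hq0 hψ).deriv
  rw [E3]
  -- algebraic identity
  have hsqμ : Real.sqrt μ ^ 2 = μ := Real.sq_sqrt hμ0.le
  have hsqκ : Real.sqrt κ ^ 2 = κ := Real.sq_sqrt hκ0.le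
  have hmul : s = Real.sqrt κ * Real.sqrt μ := by rw [← hsdef, Real.sqrt_mul hκ0.le]
  have hnum : (Real.sqrt μ - Real.sqrt κ) ^ 2 = μ + κ - 2 * s := by
    linear_combination hsqμ + hsqκ + 2 * hmul
  have hgμ : gμ = (μ + κ - 2 * s) / (κ - 1) := by
    rw [show gμ = (Real.sqrt μ - Real.sqrt κ) ^ 2 / (κ - 1) from rfl, hnum]
  have cube : ∀ a : ℝ, 0 ≤ a → ∀ r : ℝ, (a ^ r) ^ (3:ℕ) = a ^ (r * 3) := by
    intro a ha r
    rw [← Real.rpow_natCast (a ^ r) 3, ← Real.rpow_mul ha]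
    norm_num
  have c1 : ((s - 1) ^ ((2:ℝ)/3)) ^ (3:ℕ) = (s - 1) ^ 2 := by
    rw [cube _ (by linarith) _, show (2:ℝ)/3*3 = 2 by norm_num, Real.rpow_two]
  have c2 : ((κ - s) ^ ((2:ℝ)/3)) ^ (3:ℕ) = (κ - s) ^ 2 := by
    rw [cube _ (by linarith) _, show (2:ℝ)/3*3 = 2 by norm_num, Real.rpow_two]
  have c6 : ∀ a : ℝ, 0 ≤ a → (a ^ ((1:ℝ)/6)) ^ (3:ℕ) = a ^ ((1:ℝ)/2) := by
    intro a ha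
    rw [cube a ha]; norm_num
  have chalf : κ ^ ((1:ℝ)/2) * μ ^ ((1:ℝ)/2) = s := by
    rw [← Real.mul_rpow hκ0.le hμ0.le, ← Real.sqrt_eq_rpow, hsdef]
  have hfdef : fμ = (s - 1) ^ ((2:ℝ)/3) * (κ - s) ^ ((2:ℝ)/3) /
      ((κ - 1) * κ ^ ((1:ℝ)/6) * μ ^ ((1:ℝ)/6)) := by
    rw [show fμ = (Real.sqrt (κ * μ) - 1) ^ ((2 : ℝ) / 3) *
      (κ - Real.sqrt (κ * μ)) ^ ((2 : ℝ) / 3) /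
      ((κ - 1) * κ ^ ((1 : ℝ) / 6) * μ ^ ((1 : ℝ) / 6)) from rfl, hsdef]
  have hF : fμ ^ 3 = (s - 1) ^ 2 * (κ - s) ^ 2 / ((κ - 1) ^ 3 * s) := by
    rw [hfdef, div_pow, mul_pow, mul_pow, mul_pow, c1, c2, c6 κ hκ0.le, c6 μ hμ0.le,
      mul_assoc, chalf]
  have hμκ : μ = s ^ 2 / κ := by rw [eq_div_iff hκ0.ne']; linarith [hs2]
  have h1 : s - 1 ≠ 0 := by linarith
  have h2 : κ - s ≠ 0 := by linarith
  have h3 : κ - 1 ≠ 0 := by linarith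
  have h4 : s ≠ 0 := by linarith
  have hA : κ⁻¹ * (q * (κ - s) / (s - 1)) + q = q * s * (κ - 1) / (κ * (s - 1)) := by
    field_simp
    ring
  have hB : q * (κ - s) / (s - 1) + q = q * (κ - 1) / (s - 1) := by
    field_simp
    ring
  rw [div_pow fμ ψ 3, hF, hgμ, hψdef, hA, hB, hμκ]
  field_simp
  ring
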